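/- Let K be a quadratically closed field. Given any six elements t₁, t₂, t₃, t₁₂, t₂₃, t₃₁ of K, there exist matrices A₁, A₂, A₃ in SL(2,K) such that tr(A₁) = t₁, tr(A₂) = t₂, tr(A₃) = t₃, tr(A₁A₂) = t₁₂, tr(A₂A₃) = t₂₃ and tr(A₃A₁) = t₃₁. -/

import Mathlib

/-- `SL(2,K)`: 2×2 matrices of determinant 1. -/
abbrev SL2 (K : Type*) [CommRing K] := Matrix.SpecialLinearGroup (Fin 2) K

/-- A field is quadratically closed if every monic quadratic has a root. -/
def QuadClosed (K : Type*) [Field K] : Prop :=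
  ∀ a b : K, ∃ x : K, x ^ 2 + a * x + b = 0

/-- The trace of an element of `SL(2,K)`. -/
def trM {K : Type*} [CommRing K] (A : SL2 K) : K :=
  Matrix.trace (A : Matrix (Fin 2) (Fin 2) K)

/-- `f : G → K` is an `SL(2,K)` character: the trace function of some representation. -/
def IsSL2Character {K : Type*} [CommRing K] {G : Type*} [Group G] (f : G → K) : Prop :=
  ∃ ρ : G →* SL2 K, ∀ g : G, f g = trM (ρ g)

/-- A subgroup of `SL(2,K)` is reducible if some 1-dimensional subspace (the span of a
nonzero vector `v`) is invariant under all its elements. -/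
def IsReducibleSubgroup {K : Type*} [Field K] (H : Subgroup (SL2 K)) : Prop :=
  ∃ v : Fin 2 → K, v ≠ 0 ∧ ∀ A ∈ H, ∃ c : K,
    Matrix.mulVec (A : Matrix (Fin 2) (Fin 2) K) v = c • v

/-- A representation to `SL(2,K)` is reducible if some 1-dimensional subspace is invariant
under the image. -/
def IsReducibleRep {K : Type*} [Field K] {G : Type*} [Group G] (ρ : G →* SL2 K) : Prop :=
  ∃ v : Fin 2 → K, v ≠ 0 ∧ ∀ g : G, ∃ c : K,
    Matrix.mulVec ((ρ g : SL2 K) : Matrix (Fin 2) (Fin 2) K) v = c • v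

private lemma trM_eq {K : Type*} [CommRing K] (A : SL2 K) {a b c d : K}
    (hA : (A : Matrix (Fin 2) (Fin 2) K) = !![a, b; c, d]) :
    trM A = a + d := by
  rw [trM, hA, Matrix.trace_fin_two_of]

private lemma trM_mul_eq {K : Type*} [CommRing K] (A B : SL2 K) {a b c d e f g h : K}
    (hA : (A : Matrix (Fin 2) (Fin 2) K) = !![a, b; c, d])
    (hB : (B : Matrix (Fin 2) (Fin 2) K) = !![e, f; g, h]) :
    trM (A * B) = (a * e + b * g) + (c * f + d * h) := by
  rw [trM, Matrix.SpecialLinearGroup.coe_mul, hA, hB, Matrix.mul_fin_two,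
    Matrix.trace_fin_two_of]

private lemma trM_smul_left {K : Type*} [CommRing K] (A B : SL2 K) {α : K}
    (hA : (A : Matrix (Fin 2) (Fin 2) K) = !![α, 0; 0, α]) :
    trM (A * B) = α * trM B := by
  have hco : (A : Matrix (Fin 2) (Fin 2) K) = α • (1 : Matrix (Fin 2) (Fin 2) K) := by
    rw [hA]; ext i j; fin_cases i <;> fin_cases j <;> simp [Matrix.one_apply]
  rw [trM, Matrix.SpecialLinearGroup.coe_mul, hco, Matrix.smul_mul, one_mul,
    Matrix.trace_smul, smul_eq_mul, trM]

private lemma trM_smul_right {K : Type*} [CommRing K] (A B : SL2 K) {α : K}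
    (hA : (A : Matrix (Fin 2) (Fin 2) K) = !![α, 0; 0, α]) :
    trM (B * A) = α * trM B := by
  have hco : (A : Matrix (Fin 2) (Fin 2) K) = α • (1 : Matrix (Fin 2) (Fin 2) K) := by
    rw [hA]; ext i j; fin_cases i <;> fin_cases j <;> simp [Matrix.one_apply]
  rw [trM, Matrix.SpecialLinearGroup.coe_mul, hco, Matrix.mul_smul, mul_one,
    Matrix.trace_smul, smul_eq_mul, trM]


private lemma div_lin {K : Type*} [Field K] {a d D x : K} (hD : D ≠ 0)
    (h : a + d = x * D) : a / D + d / D = x := by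
  field_simp
  linear_combination h

private lemma div_mul4 {K : Type*} [Field K] {p q r u a b c d D x : K} (hD : D ≠ 0)
    (h : (p * a + q * b) + (r * c + u * d) = x * D) :
    (p * (a / D) + q * (b / D)) + (r * (c / D) + u * (d / D)) = x := by
  field_simp
  linear_combination h

private lemma div_mul4' {K : Type*} [Field K] {p q r u a b c d D x : K} (hD : D ≠ 0)
    (h : (a * p + b * q) + (c * r + d * u) = x * D) :
    ((a / D) * p + (b / D) * q) + ((c / D) * r + (d / D) * u) = x := by
  field_simp
  linear_combination h

private lemma div_det {K : Type*} [Field K] {a b c d D : K} (hD : D ≠ 0)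
    (h : a * d - b * c = D ^ 2) :
    (a / D) * (d / D) - (b / D) * (c / D) = 1 := by
  field_simp
  linear_combination h


private lemma monic_root {K : Type*} [Field K] (hK : QuadClosed K) {D M N : K}
    (hD : D ≠ 0) : ∃ w : K, D * w ^ 2 - M * w - N = 0 := by
  obtain ⟨w, hw⟩ := hK (-M / D) (-N / D)
  refine ⟨w, ?_⟩
  calc D * w ^ 2 - M * w - N = D * (w ^ 2 + -M / D * w + -N / D) := by
        field_simp
        ring
    _ = 0 := by rw [hw, mul_zero]

/-- Two matrices with prescribed traces and product trace. -/
private lemma two_mat {K : Type*} [Field K] (hK : QuadClosed K) (x y z : K) :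
    ∃ A B : SL2 K, trM A = x ∧ trM B = y ∧ trM (A * B) = z := by
  obtain ⟨s, hs⟩ := hK (-z) 1
  refine ⟨⟨!![x, -1; 1, 0], ?_⟩, ⟨!![0, s; -(z - s), y], ?_⟩, ?_, ?_, ?_⟩
  · rw [Matrix.det_fin_two_of]; ring
  · rw [Matrix.det_fin_two_of]; linear_combination -hs
  · refine (trM_eq _ rfl).trans ?_; ring
  · refine (trM_eq _ rfl).trans ?_; ring
  · refine (trM_mul_eq _ _ rfl rfl).trans ?_; ring

/-- The reducible branch: the case `t₁₂ = αβ + α⁻¹β⁻¹`. -/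
private lemma branch2 {K : Type*} [Field K] (hK : QuadClosed K)
    (t₁ t₂ t₃ t₁₂ t₂₃ t₃₁ α β : K)
    (hα : α ^ 2 - t₁ * α + 1 = 0) (hβ : β ^ 2 - t₂ * β + 1 = 0)
    (h12 : t₁₂ = α * β + (t₁ - α) * (t₂ - β)) :
    ∃ A₁ A₂ A₃ : SL2 K,
      trM A₁ = t₁ ∧ trM A₂ = t₂ ∧ trM A₃ = t₃ ∧
        trM (A₁ * A₂) = t₁₂ ∧ trM (A₂ * A₃) = t₂₃ ∧ trM (A₃ * A₁) = t₃₁ := by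
  by_cases hdeg : 2 * α = t₁
  · have hα2 : α ^ 2 = 1 := by linear_combination -hα + α * hdeg
    by_cases h31 : t₃₁ - α * t₃ = 0
    · -- use A₁ = α • 1
      obtain ⟨B, C, hB, hC, hBC⟩ := two_mat hK t₂ t₃ t₂₃
      refine ⟨⟨!![α, 0; 0, α], ?_⟩, B, C, ?_, hB, hC, ?_, hBC, ?_⟩
      · rw [Matrix.det_fin_two_of]; linear_combination hα2
      · refine (trM_eq _ rfl).trans ?_; linear_combination hdeg
      · refine (trM_smul_left _ _ rfl).trans ?_; rw [hB]; linear_combination -h12 + (t₂ - β) * hdeg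
      · refine (trM_smul_right _ _ rfl).trans ?_; rw [hC]; linear_combination -h31
    · refine ⟨⟨!![α, 1; 0, α], ?_⟩,
        ⟨!![β, (t₂₃ - (t₂ - β) * t₃) / (t₃₁ - α * t₃); 0, t₂ - β], ?_⟩,
        ⟨!![0, -(1 / (t₃₁ - α * t₃)); t₃₁ - α * t₃, t₃], ?_⟩, ?_, ?_, ?_, ?_, ?_, ?_⟩
      · rw [Matrix.det_fin_two_of]; linear_combination hα2
      · rw [Matrix.det_fin_two_of]; linear_combination -hβ
      · rw [Matrix.det_fin_two_of]; field_simp; rw [mul_comm t₃ α, div_self h31]; ring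
      · refine (trM_eq _ rfl).trans ?_; linear_combination hdeg
      · refine (trM_eq _ rfl).trans ?_; ring
      · refine (trM_eq _ rfl).trans ?_; ring
      · refine (trM_mul_eq _ _ rfl rfl).trans ?_; linear_combination -h12 + (t₂ - β) * hdeg
      · refine (trM_mul_eq _ _ rfl rfl).trans ?_; linear_combination (t₂₃ - (t₂ - β) * t₃) * mul_inv_cancel₀ h31
      · refine (trM_mul_eq _ _ rfl rfl).trans ?_; ring
  · have hne : 2 * α - t₁ ≠ 0 := fun h => hdeg (by linear_combination h)
    refine ⟨⟨!![α, 1; 0, t₁ - α], ?_⟩,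
      ⟨!![β, t₂₃ - β * ((t₃₁ - (t₁ - α) * t₃ - 1) / (2 * α - t₁)) -
          (t₂ - β) * (t₃ - (t₃₁ - (t₁ - α) * t₃ - 1) / (2 * α - t₁)); 0, t₂ - β], ?_⟩,
      ⟨!![(t₃₁ - (t₁ - α) * t₃ - 1) / (2 * α - t₁),
          ((t₃₁ - (t₁ - α) * t₃ - 1) / (2 * α - t₁)) *
            (t₃ - (t₃₁ - (t₁ - α) * t₃ - 1) / (2 * α - t₁)) - 1;
          1, t₃ - (t₃₁ - (t₁ - α) * t₃ - 1) / (2 * α - t₁)], ?_⟩, ?_, ?_, ?_, ?_, ?_, ?_⟩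
    · rw [Matrix.det_fin_two_of]; linear_combination -hα
    · rw [Matrix.det_fin_two_of]; linear_combination -hβ
    · rw [Matrix.det_fin_two_of]; ring
    · refine (trM_eq _ rfl).trans ?_; ring
    · refine (trM_eq _ rfl).trans ?_; ring
    · refine (trM_eq _ rfl).trans ?_; ring
    · refine (trM_mul_eq _ _ rfl rfl).trans ?_; linear_combination -h12
    · refine (trM_mul_eq _ _ rfl rfl).trans ?_; ring
    · refine (trM_mul_eq _ _ rfl rfl).trans ?_; linear_combination (t₃₁ - 1 + α * t₃ - t₁ * t₃) * mul_inv_cancel₀ hne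

set_option maxHeartbeats 2000000 in
theorem exists_sl2_with_prescribed_traces
    {K : Type*} [Field K] (hK : QuadClosed K)
    (t₁ t₂ t₃ t₁₂ t₂₃ t₃₁ : K) :
    ∃ A₁ A₂ A₃ : SL2 K,
      trM A₁ = t₁ ∧ trM A₂ = t₂ ∧ trM A₃ = t₃ ∧
        trM (A₁ * A₂) = t₁₂ ∧ trM (A₂ * A₃) = t₂₃ ∧ trM (A₃ * A₁) = t₃₁ := by
  obtain ⟨s, hs⟩ := hK (-t₁₂) 1
  have hssi : s * (t₁₂ - s) = 1 := by linear_combination -hs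
  by_cases hD : ((t₁₂ - s) ^ 2 + (-2) * s * (t₁₂ - s) + s ^ 2 + t₂ ^ 2 - t₁ * t₂ * (t₁₂ - s) - t₁ * t₂ * s + t₁ ^ 2 * s * (t₁₂ - s)) = 0
  · -- the degenerate (reducible) branch
    obtain ⟨α, hα'⟩ := hK (-t₁) 1
    obtain ⟨β, hβ'⟩ := hK (-t₂) 1
    have hα : α ^ 2 - t₁ * α + 1 = 0 := by linear_combination hα'
    have hβ : β ^ 2 - t₂ * β + 1 = 0 := by linear_combination hβ'
    have key : (t₁₂ - (α * β + (t₁ - α) * (t₂ - β))) *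
        (t₁₂ - (α * (t₂ - β) + (t₁ - α) * β)) = 0 := by
      linear_combination hD + ((-4) * β ^ 2 + 4 * t₂ * β - t₂ ^ 2) * hα +
        (4 - t₁ ^ 2) * hβ + (4 - t₁ ^ 2) * hssi
    rcases mul_eq_zero.mp key with h | h
    · exact branch2 hK t₁ t₂ t₃ t₁₂ t₂₃ t₃₁ α β hα hβ (by linear_combination h)
    · exact branch2 hK t₁ t₂ t₃ t₁₂ t₂₃ t₃₁ α (t₂ - β) hα (by linear_combination hβ)
        (by linear_combination h)
  · -- the irreducible branch
    obtain ⟨w, ht2⟩ := monic_root hK (M := (t₃ * (t₁₂ - s) ^ 3 - t₃ * s * (t₁₂ - s) ^ 2 - t₃ * s ^ 2 * (t₁₂ - s) + t₃ * s ^ 3 + t₂ * t₃₁ * (t₁₂ - s) ^ 2 + (-2) * t₂ * t₃₁ * s * (t₁₂ - s) + t₂ * t₃₁ * s ^ 2 + t₂ ^ 2 * t₃ * (t₁₂ - s) + t₂ ^ 2 * t₃ * s + t₂ ^ 3 * t₃₁ + t₁ * t₂₃ * (t₁₂ - s) ^ 2 + (-2) * t₁ * t₂₃ * s * (t₁₂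 - s) + t₁ * t₂₃ * s ^ 2 + (-2) * t₁ * t₂ * t₃ * (t₁₂ - s) ^ 2 + (-2) * t₁ * t₂ * t₃ * s ^ 2 - t₁ * t₂ ^ 2 * t₃₁ * (t₁₂ - s) - t₁ * t₂ ^ 2 * t₃₁ * s + t₁ * t₂ ^ 2 * t₂₃ - t₁ * t₂ ^ 3 * t₃ + t₁ ^ 2 * t₃ * s * (t₁₂ - s) ^ 2 + t₁ ^ 2 * t₃ * s ^ 2 * (t₁₂ - s) + t₁ ^ 2 * t₂ * t₃₁ * s * (t₁₂ - s) - t₁ ^ 2 * t₂ * t₂₃ * (t₁₂ - s) - t₁ ^ 2 * t₂ * t₂₃ * s + t₁ ^ 2 * t₂ ^ 2 * t₃ * (t₁₂ - s) + t₁ ^ 2 * t₂ ^ 2 * t₃ * s + t₁ ^ 3 * t₂₃ * s * (t₁₂ - s) - t₁ ^ 3 * t₂ * t₃ * s * (t₁₂ - s))) (N := (-(t₁₂ - s) ^ 4 + (4) * s * (t₁₂ - s) ^ 3 + (-6) * s ^ 2 * (t₁₂ - s) ^ 2 + (4) * s ^ 3 * (t₁₂ - s) - s ^ 4 - t₃₁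 ^ 2 * s * (t₁₂ - s) ^ 3 + (2) * t₃₁ ^ 2 * s ^ 2 * (t₁₂ - s) ^ 2 - t₃₁ ^ 2 * s ^ 3 * (t₁₂ - s) - t₂₃ * t₃₁ * (t₁₂ - s) ^ 3 + t₂₃ * t₃₁ * s * (t₁₂ - s) ^ 2 + t₂₃ * t₃₁ * s ^ 2 * (t₁₂ - s) - t₂₃ * t₃₁ * s ^ 3 - t₂₃ ^ 2 * (t₁₂ - s) ^ 2 + (2) * t₂₃ ^ 2 * s * (t₁₂ - s) - t₂₃ ^ 2 * s ^ 2 - t₃ ^ 2 * s * (t₁₂ - s) ^ 3 + (2) * t₃ ^ 2 * s ^ 2 * (t₁₂ - s) ^ 2 - t₃ ^ 2 * s ^ 3 * (t₁₂ - s) + t₂ * t₃ * t₂₃ * (t₁₂ - s) ^ 2 + (-2) * t₂ * t₃ * t₂₃ * s * (t₁₂ - s) + t₂ * t₃ * t₂₃ * s ^ 2 + (-2) * t₂ ^ 2 * (t₁₂ - s) ^ 2 + (4) * t₂ ^ 2 * s * (t₁₂ - s) + (-2) * t₂ ^ 2 * s ^ 2 - t₂ ^ 2 * t₃₁ ^ 2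 * s * (t₁₂ - s) - t₂ ^ 2 * t₂₃ * t₃₁ * (t₁₂ - s) - t₂ ^ 2 * t₂₃ * t₃₁ * s - t₂ ^ 2 * t₂₃ ^ 2 - t₂ ^ 2 * t₃ ^ 2 * s * (t₁₂ - s) + t₂ ^ 3 * t₃ * t₂₃ - t₂ ^ 4 + t₁ * t₃ * t₃₁ * s * (t₁₂ - s) ^ 3 + (-2) * t₁ * t₃ * t₃₁ * s ^ 2 * (t₁₂ - s) ^ 2 + t₁ * t₃ * t₃₁ * s ^ 3 * (t₁₂ - s) + (2) * t₁ * t₂ * (t₁₂ - s) ^ 3 + (-2) * t₁ * t₂ * s * (t₁₂ - s) ^ 2 + (-2) * t₁ * t₂ * s ^ 2 * (t₁₂ - s) + (2) * t₁ * t₂ * s ^ 3 + t₁ * t₂ * t₃₁ ^ 2 * s * (t₁₂ - s) ^ 2 + t₁ * t₂ * t₃₁ ^ 2 * s ^ 2 * (t₁₂ - s) + t₁ * t₂ * t₂₃ * t₃₁ * (t₁₂ - s) ^ 2 + (2) * t₁ * t₂ * t₂₃ * t₃₁ * s * (t₁₂ - s) + t₁ * t₂ * t₂₃ * t₃₁ *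 s ^ 2 + t₁ * t₂ * t₂₃ ^ 2 * (t₁₂ - s) + t₁ * t₂ * t₂₃ ^ 2 * s + t₁ * t₂ * t₃ ^ 2 * s * (t₁₂ - s) ^ 2 + t₁ * t₂ * t₃ ^ 2 * s ^ 2 * (t₁₂ - s) + t₁ * t₂ ^ 2 * t₃ * t₃₁ * s * (t₁₂ - s) - t₁ * t₂ ^ 2 * t₃ * t₂₃ * (t₁₂ - s) - t₁ * t₂ ^ 2 * t₃ * t₂₃ * s + (2) * t₁ * t₂ ^ 3 * (t₁₂ - s) + (2) * t₁ * t₂ ^ 3 * s + (-2) * t₁ ^ 2 * s * (t₁₂ - s) ^ 3 + (4) * t₁ ^ 2 * s ^ 2 * (t₁₂ - s) ^ 2 + (-2) * t₁ ^ 2 * s ^ 3 * (t₁₂ - s) - t₁ ^ 2 * t₃₁ ^ 2 * s ^ 2 * (t₁₂ - s) ^ 2 - t₁ ^ 2 * t₂₃ * t₃₁ * s * (t₁₂ - s) ^ 2 - t₁ ^ 2 * t₂₃ * t₃₁ * s ^ 2 * (t₁₂ - s) - t₁ ^ 2 * t₂₃ ^ 2 * s * (t₁₂ - s) - t₁ ^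 2 * t₃ ^ 2 * s ^ 2 * (t₁₂ - s) ^ 2 - t₁ ^ 2 * t₂ * t₃ * t₃₁ * s * (t₁₂ - s) ^ 2 - t₁ ^ 2 * t₂ * t₃ * t₃₁ * s ^ 2 * (t₁₂ - s) + t₁ ^ 2 * t₂ * t₃ * t₂₃ * s * (t₁₂ - s) - t₁ ^ 2 * t₂ ^ 2 * (t₁₂ - s) ^ 2 + (-4) * t₁ ^ 2 * t₂ ^ 2 * s * (t₁₂ - s) - t₁ ^ 2 * t₂ ^ 2 * s ^ 2 + t₁ ^ 3 * t₃ * t₃₁ * s ^ 2 * (t₁₂ - s) ^ 2 + (2) * t₁ ^ 3 * t₂ * s * (t₁₂ - s) ^ 2 + (2) * t₁ ^ 3 * t₂ * s ^ 2 * (t₁₂ - s) - t₁ ^ 4 * s ^ 2 * (t₁₂ - s) ^ 2)) hD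
    refine ⟨⟨!![t₁, -1; 1, 0], ?_⟩, ⟨!![0, s; -(t₁₂ - s), t₂], ?_⟩,
      ⟨!![(w * (t₁₂ - s) - w * s - t₃ * s * (t₁₂ - s) + t₃ * s ^ 2 - t₂ * t₃₁ * (t₁₂ - s) - t₂ * t₂₃ + t₂ ^ 2 * t₃ + t₁ * t₃₁ * s * (t₁₂ - s) + t₁ * t₂₃ * s - t₁ * t₂ * t₃ * s) / ((t₁₂ - s) ^ 2 + (-2) * s * (t₁₂ - s) + s ^ 2 + t₂ ^ 2 - t₁ * t₂ * (t₁₂ - s) - t₁ * t₂ * s + t₁ ^ 2 * s * (t₁₂ - s)), (-t₃₁ * s * (t₁₂ - s) + t₃₁ * s ^ 2 - t₂₃ * (t₁₂ - s) + t₂₃ * s - t₂ * w + t₂ * t₃ * (t₁₂ - s) + t₂ ^ 2 * t₃₁ + t₁ * w * s - t₁ * t₃ * s ^ 2 - t₁ * t₂ * t₃₁ * s + t₁ * t₂ * t₂₃ - t₁ * t₂ ^ 2 * t₃ - t₁ ^ 2 * t₂₃ * s + t₁ ^ 2 * t₂ * t₃ * s) / ((t₁₂ - s) ^ 2 + (-2)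 * s * (t₁₂ - s) + s ^ 2 + t₂ ^ 2 - t₁ * t₂ * (t₁₂ - s) - t₁ * t₂ * s + t₁ ^ 2 * s * (t₁₂ - s)); (-t₃₁ * (t₁₂ - s) ^ 2 + t₃₁ * s * (t₁₂ - s) - t₂₃ * (t₁₂ - s) + t₂₃ * s - t₂ * w + t₂ * t₃ * (t₁₂ - s) + t₁ * w * (t₁₂ - s) - t₁ * t₃ * s * (t₁₂ - s)) / ((t₁₂ - s) ^ 2 + (-2) * s * (t₁₂ - s) + s ^ 2 + t₂ ^ 2 - t₁ * t₂ * (t₁₂ - s) - t₁ * t₂ * s + t₁ ^ 2 * s * (t₁₂ - s)), (-w * (t₁₂ - s) + w * s + t₃ * (t₁₂ - s) ^ 2 - t₃ * s * (t₁₂ - s) + t₂ * t₃₁ * (t₁₂ - s) + t₂ * t₂₃ - t₁ * t₃₁ * s * (t₁₂ - s) - t₁ * t₂₃ * s - t₁ * t₂ * t₃ * (t₁₂ - s) + t₁ ^ 2 * t₃ * s * (t₁₂ - s)) / ((t₁₂ - s) ^ 2 + (-2) * s * (t₁₂ - s) + s ^ 2 + t₂ ^ 2 - t₁ * t₂ *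 (t₁₂ - s) - t₁ * t₂ * s + t₁ ^ 2 * s * (t₁₂ - s))], ?_⟩,
      ?_, ?_, ?_, ?_, ?_, ?_⟩
    · rw [Matrix.det_fin_two_of]; ring
    · rw [Matrix.det_fin_two_of]; linear_combination -hs
    · rw [Matrix.det_fin_two_of]
      exact div_det hD (by linear_combination -ht2)
    · refine (trM_eq _ rfl).trans ?_; ring
    · refine (trM_eq _ rfl).trans ?_; ring
    · refine (trM_eq _ rfl).trans ?_; exact div_lin hD (by ring)
    · refine (trM_mul_eq _ _ rfl rfl).trans ?_; ring
    · refine (trM_mul_eq _ _ rfl rfl).trans ?_; exact div_mul4 hD (by ring)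
    · refine (trM_mul_eq _ _ rfl rfl).trans ?_; exact div_mul4' hD (by ring)
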